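/- Let D be a positive definite matrix. The inverse of the linear map J_D(B) = ∫₀¹ D^t B D^{1−t} dt on M_n is the map B ↦ ∫₀^∞ (D+t)⁻¹ B (D+t)⁻¹ dt. -/

import Mathlib

open MeasureTheory Real Set
open Matrix
open scoped ComplexOrder


/-- `f` applied to a Hermitian matrix via the spectral theorem. -/
noncomputable def hermApply {n : ℕ} (f : ℝ → ℝ) (A : Matrix (Fin n) (Fin n) ℂ)
    (hA : A.IsHermitian) : Matrix (Fin n) (Fin n) ℂ :=
  (hA.eigenvectorUnitary : Matrix (Fin n) (Fin n) ℂ) *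
    Matrix.diagonal (fun i => ((f (hA.eigenvalues i) : ℝ) : ℂ)) *
    (star hA.eigenvectorUnitary : Matrix (Fin n) (Fin n) ℂ)



open MeasureTheory Real Set

lemma int1 (a b : ℝ) (ha : 0 < a) (hb : 0 < b) :
    ∫ t in (0:ℝ)..1, a ^ t * b ^ (1 - t)
      = if a = b then a else (a - b) / (Real.log a - Real.log b) := by
  by_cases hab : a = b
  · subst hab
    simp only [if_pos rfl]
    have : ∀ t : ℝ, a ^ t * a ^ (1 - t) = a := by
      intro t
      rw [← Real.rpow_add ha]
      simp
    simp only [this]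
    simp
  · simp only [if_neg hab]
    set c := Real.log a - Real.log b with hc
    have hcne : c ≠ 0 := by
      intro h
      apply hab
      have := sub_eq_zero.mp h
      exact Real.log_injOn_pos (mem_Ioi.mpr ha) (mem_Ioi.mpr hb) this
    have key : ∀ t : ℝ, a ^ t * b ^ (1 - t) = b * Real.exp (c * t) := by
      intro t
      rw [Real.rpow_def_of_pos ha, Real.rpow_def_of_pos hb]
      rw [← Real.exp_log hb]
      rw [← Real.exp_add, ← Real.exp_add, Real.log_exp]
      rw [hc]
      ring_nf
    simp only [key]
    rw [intervalIntegral.integral_const_mul]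
    have := intervalIntegral.integral_comp_mul_left (fun x => Real.exp x) (c := c) (a := 0) (b := 1) hcne
    simp only [mul_zero, mul_one] at this
    rw [this]
    rw [_root_.integral_exp]
    rw [Real.exp_zero, hc, Real.exp_sub, Real.exp_log ha, Real.exp_log hb]
    have hcne' : Real.log a - Real.log b ≠ 0 := hcne
    have hb' := hb.ne'
    simp only [smul_eq_mul]
    field_simp

lemma deriv2 (a b : ℝ) (ha : 0 < a) (hb : 0 < b) (hab : a ≠ b) :
    ∀ t ∈ Ici (0:ℝ), HasDerivAt (fun t => (b - a)⁻¹ * (Real.log (a + t) - Real.log (b + t)))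
      (((a + t) * (b + t))⁻¹) t := by
  intro t ht
  have ht' : (0:ℝ) ≤ t := ht
  have hat : 0 < a + t := by positivity
  have hbt : 0 < b + t := by positivity
  have hba : b - a ≠ 0 := sub_ne_zero.mpr (Ne.symm hab)
  have h1 : HasDerivAt (fun t : ℝ => a + t) 1 t := (hasDerivAt_id t).const_add a
  have h2 : HasDerivAt (fun t : ℝ => b + t) 1 t := (hasDerivAt_id t).const_add b
  have h3 : HasDerivAt (fun t : ℝ => Real.log (a + t)) ((a + t)⁻¹) t := by
    simpa using (h1.log hat.ne')
  have h4 : HasDerivAt (fun t : ℝ => Real.log (b + t)) ((b + t)⁻¹) t := by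
    simpa using (h2.log hbt.ne')
  have h5 := ((h3.sub h4).const_mul ((b - a)⁻¹))
  refine h5.congr_deriv ?_
  field_simp
  ring

lemma tendsto2 (a b : ℝ) (ha : 0 < a) (hb : 0 < b) :
    Filter.Tendsto (fun t => (b - a)⁻¹ * (Real.log (a + t) - Real.log (b + t)))
      Filter.atTop (nhds 0) := by
  have h0 : Filter.Tendsto (fun t : ℝ => (a - b) * (b + t)⁻¹) Filter.atTop (nhds 0) := by
    have : Filter.Tendsto (fun t : ℝ => b + t) Filter.atTop Filter.atTop :=
      Filter.tendsto_atTop_add_const_left _ b Filter.tendsto_id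
    simpa using (this.inv_tendsto_atTop.const_mul (a - b))
  have h1 : Filter.Tendsto (fun t : ℝ => 1 + (a - b) * (b + t)⁻¹) Filter.atTop (nhds 1) := by
    simpa using (tendsto_const_nhds (x := (1:ℝ)) (f := Filter.atTop)).add h0
  have h2 : Filter.Tendsto (fun t : ℝ => Real.log (1 + (a - b) * (b + t)⁻¹))
      Filter.atTop (nhds 0) := by
    have := (Real.continuousAt_log (x := 1) one_ne_zero).tendsto.comp h1
    simpa [Function.comp_def] using this
  have h3 : Filter.Tendsto (fun t : ℝ => Real.log (a + t) - Real.log (b + t))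
      Filter.atTop (nhds 0) := by
    apply h2.congr'
    filter_upwards [Filter.eventually_gt_atTop (0 : ℝ)] with t ht
    have hat : 0 < a + t := by positivity
    have hbt : 0 < b + t := by positivity
    have : 1 + (a - b) * (b + t)⁻¹ = (a + t) / (b + t) := by field_simp; ring
    rw [this, Real.log_div hat.ne' hbt.ne']
  simpa using h3.const_mul ((b - a)⁻¹)

lemma nonneg2 (a b : ℝ) (ha : 0 < a) (hb : 0 < b) :
    ∀ t ∈ Ioi (0:ℝ), 0 ≤ ((a + t) * (b + t))⁻¹ := by
  intro t ht
  have ht' : (0:ℝ) < t := ht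
  positivity

lemma intble2 (a b : ℝ) (ha : 0 < a) (hb : 0 < b) :
    IntegrableOn (fun t => ((a + t) * (b + t))⁻¹) (Ioi (0:ℝ)) := by
  by_cases hab : a = b
  · subst hab
    apply integrableOn_Ioi_deriv_of_nonneg' (g := fun t => -(a + t)⁻¹)
    · intro t ht
      have ht' : (0:ℝ) ≤ t := ht
      have hat : 0 < a + t := by positivity
      have h1 : HasDerivAt (fun t : ℝ => a + t) 1 t := (hasDerivAt_id t).const_add a
      have := (h1.inv hat.ne').neg
      refine this.congr_deriv ?_
      field_simp
      try ring
    · exact nonneg2 a a ha ha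
    · have : Filter.Tendsto (fun t : ℝ => a + t) Filter.atTop Filter.atTop :=
        Filter.tendsto_atTop_add_const_left _ a Filter.tendsto_id
      simpa using this.inv_tendsto_atTop.neg
  · exact integrableOn_Ioi_deriv_of_nonneg' (deriv2 a b ha hb hab) (nonneg2 a b ha hb)
      (tendsto2 a b ha hb)

lemma int2 (a b : ℝ) (ha : 0 < a) (hb : 0 < b) :
    ∫ t in Ioi (0:ℝ), ((a + t) * (b + t))⁻¹
      = if a = b then a⁻¹ else (Real.log a - Real.log b) / (a - b) := by
  by_cases hab : a = b
  · subst hab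
    simp only [if_pos rfl]
    have hder : ∀ t ∈ Ici (0:ℝ), HasDerivAt (fun t : ℝ => -(a + t)⁻¹)
        (((a + t) * (a + t))⁻¹) t := by
      intro t ht
      have ht' : (0:ℝ) ≤ t := ht
      have hat : 0 < a + t := by positivity
      have h1 : HasDerivAt (fun t : ℝ => a + t) 1 t := (hasDerivAt_id t).const_add a
      have := (h1.inv hat.ne').neg
      refine this.congr_deriv ?_
      field_simp
      try ring
    have htend : Filter.Tendsto (fun t : ℝ => -(a + t)⁻¹) Filter.atTop (nhds 0) := by
      have : Filter.Tendsto (fun t : ℝ => a + t) Filter.atTop Filter.atTop :=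
        Filter.tendsto_atTop_add_const_left _ a Filter.tendsto_id
      simpa using this.inv_tendsto_atTop.neg
    rw [integral_Ioi_of_hasDerivAt_of_nonneg' hder (nonneg2 a a ha ha) htend]
    simp
  · simp only [if_neg hab]
    rw [integral_Ioi_of_hasDerivAt_of_nonneg' (deriv2 a b ha hb hab) (nonneg2 a b ha hb)
      (tendsto2 a b ha hb)]
    have hba : b - a ≠ 0 := sub_ne_zero.mpr (Ne.symm hab)
    have h1 : a - b ≠ 0 := sub_ne_zero.mpr hab
    field_simp
    ring

lemma prod12 (a b : ℝ) (ha : 0 < a) (hb : 0 < b) :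
    (∫ t in (0:ℝ)..1, a ^ t * b ^ (1 - t)) * (∫ t in Ioi (0:ℝ), ((a + t) * (b + t))⁻¹) = 1 := by
  rw [int1 a b ha hb, int2 a b ha hb]
  by_cases hab : a = b
  · subst hab; simp [ha.ne']
  · simp only [if_neg hab]
    have h1 : a - b ≠ 0 := sub_ne_zero.mpr hab
    have h2 : Real.log a - Real.log b ≠ 0 := by
      intro h
      exact hab (Real.log_injOn_pos (mem_Ioi.mpr ha) (mem_Ioi.mpr hb) (sub_eq_zero.mp h))
    field_simp


/-- entrywise integral commutes with fixed conjugation -/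
lemma entry_integral_conj {n : ℕ} (μ : Measure ℝ) (P Q : Matrix (Fin n) (Fin n) ℂ)
    (M : ℝ → Matrix (Fin n) (Fin n) ℂ)
    (hM : ∀ k l, Integrable (fun t => M t k l) μ) :
    (Matrix.of fun i j => ∫ t, (P * M t * Q) i j ∂μ)
      = P * (Matrix.of fun k l => ∫ t, M t k l ∂μ) * Q := by
  ext i j
  simp only [Matrix.of_apply, Matrix.mul_apply]
  have h1 : ∀ t, (∑ l, (∑ k, P i k * M t k l) * Q l j)
      = ∑ l, ∑ k, P i k * M t k l * Q l j := by
    intro t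
    congr 1
    ext l
    rw [Finset.sum_mul]
  calc ∫ t, ∑ l, (∑ k, P i k * M t k l) * Q l j ∂μ
      = ∫ t, ∑ l, ∑ k, P i k * M t k l * Q l j ∂μ := by simp only [h1]
    _ = ∑ l, ∑ k, ∫ t, P i k * M t k l * Q l j ∂μ := by
        rw [integral_finset_sum]
        · congr 1
          ext l
          rw [integral_finset_sum]
          intro k _
          exact (((hM k l).const_mul _).mul_const _)
        · intro l _
          exact integrable_finset_sum _ fun k _ => (((hM k l).const_mul _).mul_const _)
    _ = ∑ l, (∑ k, P i k * ∫ t, M t k l ∂μ) * Q l j := by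
        congr 1
        ext l
        rw [Finset.sum_mul]
        congr 1
        ext k
        rw [show (fun t => P i k * M t k l * Q l j) = fun t => P i k * (M t k l * Q l j) by
          funext t; ring]
        rw [integral_const_mul, integral_mul_const]
        ring


lemma conj_diag_inv {n : ℕ} (U : Matrix (Fin n) (Fin n) ℂ) (hU1 : star U * U = 1)
    (hU2 : U * star U = 1) (d : Fin n → ℂ) (hd : ∀ k, d k ≠ 0) :
    (U * Matrix.diagonal d * star U)⁻¹ = U * Matrix.diagonal (fun k => (d k)⁻¹) * star U := by
  apply Matrix.inv_eq_right_inv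
  calc U * Matrix.diagonal d * star U * (U * Matrix.diagonal (fun k => (d k)⁻¹) * star U)
      = U * Matrix.diagonal d * (star U * U) * Matrix.diagonal (fun k => (d k)⁻¹) * star U := by
        simp only [Matrix.mul_assoc]
    _ = U * (Matrix.diagonal d * Matrix.diagonal (fun k => (d k)⁻¹)) * star U := by
        rw [hU1]; simp only [Matrix.mul_one, Matrix.mul_assoc]
    _ = 1 := by
        rw [Matrix.diagonal_mul_diagonal]
        have : (fun k => d k * (d k)⁻¹) = fun _ => (1:ℂ) := funext fun k => mul_inv_cancel₀ (hd k)
        rw [this, Matrix.diagonal_one, Matrix.mul_one, hU2]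

/-- conjugation sandwich extraction -/
lemma sandwich_eq {n : ℕ} (U : Matrix (Fin n) (Fin n) ℂ) (hU1 : star U * U = 1)
    (hU2 : U * star U = 1) (X B : Matrix (Fin n) (Fin n) ℂ)
    (h : X = U * Matrix.of (fun k l => (star U * B * U) k l) * star U) : X = B := by
  rw [h]
  have : Matrix.of (fun k l => (star U * B * U) k l) = star U * B * U := rfl
  rw [this]
  calc U * (star U * B * U) * star U = (U * star U) * B * (U * star U) := by
        simp only [Matrix.mul_assoc]
    _ = B := by rw [hU2]; simp

/-- for positive definite `D`, the inverse of the map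
`J_D : B ↦ ∫₀¹ D^t B D^{1-t} dt` is `B ↦ ∫₀^∞ (D+t)⁻¹ B (D+t)⁻¹ dt`
(integrals taken entrywise; `D^t` is defined by functional calculus). -/
theorem stmt5 {n : ℕ} (D : Matrix (Fin n) (Fin n) ℂ) (hD : D.PosDef)
    (JD K : Matrix (Fin n) (Fin n) ℂ → Matrix (Fin n) (Fin n) ℂ)
    (hJD : ∀ B, JD B = Matrix.of fun i j => ∫ t in (0 : ℝ)..1,
      (hermApply (fun x => x ^ t) D hD.1 * B * hermApply (fun x => x ^ (1 - t)) D hD.1) i j)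
    (hK : ∀ B, K B = Matrix.of fun i j => ∫ t in Set.Ioi (0 : ℝ),
      ((D + (t : ℂ) • 1)⁻¹ * B * (D + (t : ℂ) • 1)⁻¹) i j) :
    ∀ B, JD (K B) = B ∧ K (JD B) = B := by
  set U : Matrix (Fin n) (Fin n) ℂ := (hD.1.eigenvectorUnitary : Matrix (Fin n) (Fin n) ℂ)
    with hU
  have hU1 : star U * U = 1 := Matrix.UnitaryGroup.star_mul_self _
  have hU2 : U * star U = 1 := Matrix.mem_unitaryGroup_iff.mp hD.1.eigenvectorUnitary.2
  set lam : Fin n → ℝ := hD.1.eigenvalues with hlamdef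
  have hlam : ∀ i, 0 < lam i := fun i => hD.eigenvalues_pos i
  -- the two scalar kernels
  set m : Fin n → Fin n → ℝ := fun k l => ∫ t in (0:ℝ)..1, lam k ^ t * lam l ^ (1 - t) with hm
  set w : Fin n → Fin n → ℝ :=
    fun k l => ∫ t in Ioi (0:ℝ), ((lam k + t) * (lam l + t))⁻¹ with hw
  have hmw : ∀ k l, (m k l : ℂ) * (w k l : ℂ) = 1 := by
    intro k l
    rw [← Complex.ofReal_mul, prod12 _ _ (hlam k) (hlam l)]
    norm_num
  -- J in conjugated form
  have hJform : ∀ B, JD B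
      = U * Matrix.of (fun k l => (m k l : ℂ) * (star U * B * U) k l) * star U := by
    intro B
    rw [hJD B]
    set C := star U * B * U with hC
    have step1 : ∀ t : ℝ,
        hermApply (fun x => x ^ t) D hD.1 * B * hermApply (fun x => x ^ (1 - t)) D hD.1
        = U * (Matrix.diagonal (fun i => ((lam i ^ t : ℝ) : ℂ)) * C
            * Matrix.diagonal (fun i => ((lam i ^ (1 - t) : ℝ) : ℂ))) * star U := by
      intro t
      simp only [hermApply, hC, Matrix.mul_assoc]
      rfl
    have hcont : ∀ k l, Continuous (fun t : ℝ =>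
        (Matrix.diagonal (fun i => ((lam i ^ t : ℝ) : ℂ)) * C
          * Matrix.diagonal (fun i => ((lam i ^ (1 - t) : ℝ) : ℂ))) k l) := by
      intro k l
      simp only [Matrix.mul_diagonal, Matrix.diagonal_mul]
      have e1 : (fun t : ℝ => lam k ^ t) = fun t => Real.exp (Real.log (lam k) * t) :=
        funext fun t => Real.rpow_def_of_pos (hlam k) t
      have e2 : (fun t : ℝ => lam l ^ (1 - t)) = fun t =>
          Real.exp (Real.log (lam l) * (1 - t)) :=
        funext fun t => Real.rpow_def_of_pos (hlam l) _
      have c1 : Continuous (fun t : ℝ => lam k ^ t) := by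
        rw [e1]; continuity
      have c2 : Continuous (fun t : ℝ => lam l ^ (1 - t)) := by
        rw [e2]; continuity
      exact ((Complex.continuous_ofReal.comp c1).mul continuous_const).mul
        (Complex.continuous_ofReal.comp c2)
    have hint : ∀ k l, Integrable (fun t : ℝ =>
        (Matrix.diagonal (fun i => ((lam i ^ t : ℝ) : ℂ)) * C
          * Matrix.diagonal (fun i => ((lam i ^ (1 - t) : ℝ) : ℂ))) k l)
        (volume.restrict (Set.Ioc (0:ℝ) 1)) :=
      fun k l => ((hcont k l).integrableOn_Ioc)
    have := entry_integral_conj (volume.restrict (Set.Ioc (0:ℝ) 1)) U (star U) _ hint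
    have lhs_eq : (Matrix.of fun i j => ∫ t in (0:ℝ)..1,
        (hermApply (fun x => x ^ t) D hD.1 * B * hermApply (fun x => x ^ (1 - t)) D hD.1) i j)
        = Matrix.of fun i j => ∫ t in Set.Ioc (0:ℝ) 1, (U * (Matrix.diagonal
            (fun i => ((lam i ^ t : ℝ) : ℂ)) * C
            * Matrix.diagonal (fun i => ((lam i ^ (1 - t) : ℝ) : ℂ))) * star U) i j := by
      ext i j
      simp only [Matrix.of_apply]
      rw [intervalIntegral.integral_of_le zero_le_one]
      congr 1
      funext t
      rw [step1 t]
    rw [lhs_eq]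
    rw [this]
    congr 1
    · congr 1
      ext k l
      simp only [Matrix.of_apply, Matrix.mul_diagonal, Matrix.diagonal_mul]
      have : (fun t : ℝ => ((lam k ^ t : ℝ) : ℂ) * C k l * ((lam l ^ (1 - t) : ℝ) : ℂ))
          = fun t : ℝ => (((lam k ^ t * lam l ^ (1 - t) : ℝ) : ℂ)) * C k l := by
        funext t; push_cast; ring
      rw [this, integral_mul_const]
      have h2 : ∫ a in Set.Ioc (0:ℝ) 1, ((lam k ^ a * lam l ^ (1-a) : ℝ) : ℂ)
          = ((∫ a in Set.Ioc (0:ℝ) 1, lam k ^ a * lam l ^ (1-a) : ℝ) : ℂ) := integral_ofReal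
      rw [h2]
      congr 2
      show _ = ∫ t in (0:ℝ)..1, lam k ^ t * lam l ^ (1 - t)
      rw [intervalIntegral.integral_of_le zero_le_one]
  have hKform : ∀ B, K B
      = U * Matrix.of (fun k l => (w k l : ℂ) * (star U * B * U) k l) * star U := by
    intro B
    rw [hK B]
    set C := star U * B * U with hC
    have hDspec : D = U * Matrix.diagonal (fun i => ((lam i : ℝ) : ℂ)) * star U := by
      have h := hD.1.spectral_theorem
      rw [Unitary.conjStarAlgAut_apply] at h
      exact h
    have hinv : ∀ t : ℝ, t ∈ Set.Ioi (0:ℝ) → (D + (t:ℂ) • 1)⁻¹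
        = U * Matrix.diagonal (fun k => ((((lam k + t)⁻¹ : ℝ)) : ℂ)) * star U := by
      intro t ht
      have ht' : (0:ℝ) < t := ht
      have hsum : D + (t:ℂ) • 1
          = U * Matrix.diagonal (fun k => ((lam k + t : ℝ) : ℂ)) * star U := by
        have h1 : (t:ℂ) • (1 : Matrix (Fin n) (Fin n) ℂ)
            = U * Matrix.diagonal (fun _ : Fin n => (t:ℂ)) * star U := by
          rw [← Matrix.smul_one_eq_diagonal, Matrix.mul_smul, Matrix.smul_mul,
            Matrix.mul_one, hU2]
        rw [hDspec, h1, ← Matrix.add_mul, ← Matrix.mul_add, Matrix.diagonal_add]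
        congr 3
        funext k
        push_cast
        ring
      have hne : ∀ k, ((lam k + t : ℝ) : ℂ) ≠ 0 := by
        intro k
        have : (0:ℝ) < lam k + t := by have := hlam k; positivity
        exact Complex.ofReal_ne_zero.mpr this.ne'
      have hdiag : (fun k => ((lam k + t : ℝ) : ℂ)⁻¹)
          = fun k => (((lam k + t)⁻¹ : ℝ) : ℂ) := by
        funext k
        exact (Complex.ofReal_inv _).symm
      rw [hsum, conj_diag_inv U hU1 hU2 _ hne, hdiag]
    have hstep : (Matrix.of fun i j => ∫ t in Set.Ioi (0:ℝ),
        ((D + (t : ℂ) • 1)⁻¹ * B * (D + (t : ℂ) • 1)⁻¹) i j)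
        = Matrix.of fun i j => ∫ t in Set.Ioi (0:ℝ),
          (U * (Matrix.diagonal (fun k => (((lam k + t)⁻¹ : ℝ) : ℂ)) * C
            * Matrix.diagonal (fun k => (((lam k + t)⁻¹ : ℝ) : ℂ))) * star U) i j := by
      ext i j
      simp only [Matrix.of_apply]
      apply setIntegral_congr_fun measurableSet_Ioi
      intro t ht
      simp only [hinv t ht, hC, Matrix.mul_assoc]
    rw [hstep]
    have hint : ∀ k l, Integrable (fun t : ℝ =>
        (Matrix.diagonal (fun k => (((lam k + t)⁻¹ : ℝ) : ℂ)) * C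
          * Matrix.diagonal (fun k => (((lam k + t)⁻¹ : ℝ) : ℂ))) k l)
        (volume.restrict (Set.Ioi (0:ℝ))) := by
      intro k l
      have heq : (fun t : ℝ =>
          (Matrix.diagonal (fun k => (((lam k + t)⁻¹ : ℝ) : ℂ)) * C
            * Matrix.diagonal (fun k => (((lam k + t)⁻¹ : ℝ) : ℂ))) k l)
          = fun t : ℝ => ((((lam k + t) * (lam l + t))⁻¹ : ℝ) : ℂ) * C k l := by
        funext t
        simp only [Matrix.mul_diagonal, Matrix.diagonal_mul]
        push_cast
        rw [mul_inv]
        ring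
      rw [heq]
      exact ((intble2 _ _ (hlam k) (hlam l)).ofReal.mul_const _)
    rw [entry_integral_conj (volume.restrict (Set.Ioi (0:ℝ))) U (star U) _ hint]
    congr 2
    ext k l
    simp only [Matrix.of_apply, Matrix.mul_diagonal, Matrix.diagonal_mul]
    have heq : (fun t : ℝ => (((lam k + t)⁻¹ : ℝ) : ℂ) * C k l * (((lam l + t)⁻¹ : ℝ) : ℂ))
        = fun t : ℝ => ((((lam k + t) * (lam l + t))⁻¹ : ℝ) : ℂ) * C k l := by
      funext t
      push_cast
      rw [mul_inv]
      ring
    rw [heq, integral_mul_const]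
    have h2 : ∫ t in Set.Ioi (0:ℝ), ((((lam k + t) * (lam l + t))⁻¹ : ℝ) : ℂ)
        = ((∫ t in Set.Ioi (0:ℝ), ((lam k + t) * (lam l + t))⁻¹ : ℝ) : ℂ) := integral_ofReal
    rw [h2]
  -- final assembly
  intro B
  constructor
  · apply sandwich_eq U hU1 hU2
    rw [hJform (K B)]
    have hmid : star U * (K B) * U
        = Matrix.of (fun k l => (w k l : ℂ) * (star U * B * U) k l) := by
      rw [hKform B]
      calc star U * (U * Matrix.of (fun k l => (w k l : ℂ) * (star U * B * U) k l) * star U) * U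
          = (star U * U) * Matrix.of (fun k l => (w k l : ℂ) * (star U * B * U) k l)
            * (star U * U) := by simp only [Matrix.mul_assoc]
        _ = _ := by rw [hU1]; simp
    rw [hmid]
    congr 2
    ext k l
    simp only [Matrix.of_apply]
    rw [← mul_assoc, hmw k l, one_mul]
  · apply sandwich_eq U hU1 hU2
    rw [hKform (JD B)]
    have hmid : star U * (JD B) * U
        = Matrix.of (fun k l => (m k l : ℂ) * (star U * B * U) k l) := by
      rw [hJform B]
      calc star U * (U * Matrix.of (fun k l => (m k l : ℂ) * (star U * B * U) k l) * star U) * U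
          = (star U * U) * Matrix.of (fun k l => (m k l : ℂ) * (star U * B * U) k l)
            * (star U * U) := by simp only [Matrix.mul_assoc]
        _ = _ := by rw [hU1]; simp
    rw [hmid]
    congr 2
    ext k l
    simp only [Matrix.of_apply]
    rw [← mul_assoc, mul_comm ((w k l : ℂ)) ((m k l : ℂ)), hmw k l, one_mul]
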